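/- arXiv:2006.01678 — 5 statements merged into one kernel-verified Lean document; each statement's English description precedes it below -/
import Mathlib

section
/- Let X be a bipartite graph with bipartition parts P and Q that has at least one edge, contains no induced cycle of length at least 6, and is biregular with respect to (P,Q). Then there exist integers a,b ≥ 1 such that every connected component C of X satisfies |C∩P| = a, |C∩Q| = b, and every vertex of C∩P is adjacent to every vertex of C∩Q; that is, X is a disjoint union of m copies of the complete bipartite graph K_{a,b}, where m is the number of connected components of X. -/
open SimpleGraph

/-- `P`, `Q` form a bipartition of the graph `X`. -/
def IsBipartition {V : Type*} (X : SimpleGraph V) (P Q : Set V) : Prop :=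
  (∀ v, v ∈ P ∨ v ∈ Q) ∧ Disjoint P Q ∧
    ∀ u v, X.Adj u v → (u ∈ P ∧ v ∈ Q) ∨ (u ∈ Q ∧ v ∈ P)

/-- `X` contains no induced cycle of length at least 6. -/
def NoLongInducedCycle {V : Type*} (X : SimpleGraph V) : Prop :=
  ∀ n : ℕ, 6 ≤ n → IsEmpty (SimpleGraph.cycleGraph n ↪g X)

def IP {V : Type*} (X : SimpleGraph V) (f : ℕ → V) (k : ℕ) : Prop :=
  (∀ i ≤ k, ∀ j ≤ k, f i = f j → i = j) ∧
  (∀ i < k, X.Adj (f i) (f (i+1))) ∧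
  (∀ i ≤ k, ∀ j ≤ k, i + 1 < j → ¬ X.Adj (f i) (f j))

lemma fin_sub_val_one {n : ℕ} (a b : Fin (n+2)) :
    ((a - b : Fin (n+2)).val = 1) ↔ (a.val = b.val + 1 ∨ (a.val = 0 ∧ b.val = n+1)) := by
  have hA := a.isLt
  have hB := b.isLt
  rw [Fin.sub_def]
  simp only
  have h1 : (n + 2 - b.val + a.val) % (n+2) =
      if n + 2 - b.val + a.val < n + 2 then n + 2 - b.val + a.val
      else n + 2 - b.val + a.val - (n+2) := by
    split
    · exact Nat.mod_eq_of_lt ‹_›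
    · rw [Nat.mod_eq_sub_mod (by omega), Nat.mod_eq_of_lt (by omega)]
  rw [h1]
  split <;> omega

lemma cycle_adj_iff {n : ℕ} (a b : Fin (n+2)) :
    (cycleGraph (n+2)).Adj a b ↔
      (a.val = b.val + 1 ∨ b.val = a.val + 1 ∨
       (a.val = 0 ∧ b.val = n+1) ∨ (b.val = 0 ∧ a.val = n+1)) := by
  rw [cycleGraph_adj]
  have h1 : (a - b = (1 : Fin (n+2))) ↔ ((a - b : Fin (n+2)).val = 1) := by
    rw [Fin.ext_iff]; simp [Fin.val_one]
  have h2 : (b - a = (1 : Fin (n+2))) ↔ ((b - a : Fin (n+2)).val = 1) := by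
    rw [Fin.ext_iff]; simp [Fin.val_one]
  rw [h1, h2, fin_sub_val_one, fin_sub_val_one]
  tauto

lemma extend_ip {V : Type*} [Fintype V] (X : SimpleGraph V) (P Q : Set V)
    (hbip : IsBipartition X P Q)
    (hchordal : NoLongInducedCycle X)
    (hreg : ∀ u v : V, ((u ∈ P ∧ v ∈ P) ∨ (u ∈ Q ∧ v ∈ Q)) →
      (X.neighborSet u).ncard = (X.neighborSet v).ncard)
    {f : ℕ → V} {k : ℕ} (hk : 3 ≤ k) (hf : IP X f k) :
    ∃ g, IP X g (k+1) := by
  classical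
  obtain ⟨hinj, hedg, hnadj⟩ := hf
  -- basic bipartition facts
  have hopp : ∀ {x y : V}, X.Adj x y → (x ∈ P ↔ y ∉ P) := by
    intro x y h
    have hd := Set.disjoint_left.mp hbip.2.1
    rcases hbip.2.2 x y h with ⟨hx, hy⟩ | ⟨hx, hy⟩
    · exact ⟨fun _ => fun hyP => hd hyP hy, fun _ => hx⟩
    · exact ⟨fun hxP => absurd hx (hd hxP), fun hyn => absurd hy hyn⟩
  -- consecutive edges near the end of the path
  have e1 : X.Adj (f (k-3)) (f (k-2)) := by
    have := hedg (k-3) (by omega)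
    have e : k - 3 + 1 = k - 2 := by omega
    rwa [e] at this
  have e2 : X.Adj (f (k-2)) (f (k-1)) := by
    have := hedg (k-2) (by omega)
    have e : k - 2 + 1 = k - 1 := by omega
    rwa [e] at this
  have e3 : X.Adj (f (k-1)) (f k) := by
    have := hedg (k-1) (by omega)
    have e : k - 1 + 1 = k := by omega
    rwa [e] at this
  have hsame : f (k-2) ∈ P ↔ f k ∈ P := by
    have h1 := hopp e2
    have h2 := hopp e3
    tauto
  have hcard : (X.neighborSet (f (k-2))).ncard = (X.neighborSet (f k)).ncard := by
    by_cases hp : f (k-2) ∈ P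
    · exact hreg _ _ (Or.inl ⟨hp, hsame.mp hp⟩)
    · have h1 : f (k-2) ∈ Q := (hbip.1 _).resolve_left hp
      have h2 : f k ∈ Q := (hbip.1 _).resolve_left (fun h => hp (hsame.mpr h))
      exact hreg _ _ (Or.inr ⟨h1, h2⟩)
  have hx : f (k-3) ∈ X.neighborSet (f (k-2)) := e1.symm
  have hx2 : f (k-3) ∉ X.neighborSet (f k) := by
    intro h
    exact hnadj (k-3) (by omega) k le_rfl (by omega) (X.adj_symm h)
  obtain ⟨w, hwk, hwk2⟩ : ∃ w ∈ X.neighborSet (f k), w ∉ X.neighborSet (f (k-2)) := by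
    by_contra hcon
    push_neg at hcon
    have hss : X.neighborSet (f k) ⊂ X.neighborSet (f (k-2)) :=
      ⟨fun z hz => hcon z hz, fun hsub => hx2 (hsub hx)⟩
    have := Set.ncard_lt_ncard hss (Set.toFinite _)
    omega
  have hwadj : X.Adj (f k) w := hwk
  -- w is distinct from all path vertices
  have hwne : ∀ i ≤ k, w ≠ f i := by
    intro i hi hEq
    have hAdj : X.Adj (f k) (f i) := hEq ▸ hwadj
    have : i = k ∨ i = k - 1 ∨ i + 1 < k := by omega
    rcases this with h | h | h
    · subst h; exact X.irrefl hAdj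
    · subst h
      exact hwk2 (hEq ▸ (e2 : X.Adj (f (k-2)) (f (k-1))))
    · exact hnadj i hi k le_rfl h (X.adj_symm hAdj)
  -- same-side nonadjacency with w
  have hwP : f k ∈ P ↔ w ∉ P := hopp hwadj
  have hw1 : ¬ X.Adj w (f (k-1)) := by
    intro h
    have h1 := hopp h
    have h2 := hopp e3
    have h3 := hbip.1 w
    have h4 := hbip.1 (f (k-1))
    tauto
  have hw3 : ¬ X.Adj w (f (k-3)) := by
    intro h
    have h1 := hopp h
    have h2 := hopp e1
    tauto
  by_cases hB : ∃ i, i < k ∧ X.Adj w (f i)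
  · -- leads to a long induced cycle: contradiction
    exfalso
    obtain ⟨i0, hi0k, hi0⟩ := hB
    set j := Nat.findGreatest (fun i => X.Adj w (f i)) (k-1) with hjdef
    have hj : X.Adj w (f j) :=
      Nat.findGreatest_spec (P := fun i => X.Adj w (f i)) (n := k-1)
        (show i0 ≤ k - 1 by omega) hi0
    have hjle : j ≤ k - 1 := Nat.findGreatest_le _
    have hjmax : ∀ i, j < i → i ≤ k - 1 → ¬ X.Adj w (f i) := by
      intro i h1 h2
      exact Nat.findGreatest_is_greatest h1 h2
    have hj1 : j ≠ k - 1 := fun h => hw1 (h ▸ hj)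
    have hj2 : j ≠ k - 2 := fun h => hwk2 (X.adj_symm (h ▸ hj))
    have hj3 : j ≠ k - 3 := fun h => hw3 (h ▸ hj)
    have hj4 : j + 4 ≤ k := by omega
    obtain ⟨n, hn⟩ : ∃ n, k - j = n := ⟨k - j, rfl⟩
    have hn4 : 4 ≤ n := by omega
    have hkj : j + n = k := by omega
    set c : Fin (n+2) → V := fun i => if i.val = n+1 then w else f (j + i.val) with hc
    have hcval : ∀ i : Fin (n+2), i.val ≠ n+1 → c i = f (j + i.val) := by
      intro i h; simp [hc, h]
    have hcw : ∀ i : Fin (n+2), i.val = n+1 → c i = w := by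
      intro i h; simp [hc, h]
    have hcf : ∀ s t : ℕ, s ≤ n → t ≤ n →
        (X.Adj (f (j+s)) (f (j+t)) ↔ (s = t+1 ∨ t = s+1)) := by
      intro s t hs ht
      constructor
      · intro h
        by_contra hcon
        push_neg at hcon
        have hcase : s = t ∨ s + 1 < t ∨ t + 1 < s := by omega
        rcases hcase with h1 | h1 | h1
        · subst h1; exact X.irrefl h
        · exact hnadj (j+s) (by omega) (j+t) (by omega) (by omega) h
        · exact hnadj (j+t) (by omega) (j+s) (by omega) (by omega) (X.adj_symm h)
      · intro h
        rcases h with h1 | h1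
        · have := hedg (j+t) (by omega)
          have e : j + t + 1 = j + s := by omega
          rw [e] at this
          exact X.adj_symm this
        · have := hedg (j+s) (by omega)
          have e : j + s + 1 = j + t := by omega
          rw [e] at this
          exact this
    have hwf : ∀ s : ℕ, s ≤ n → (X.Adj (f (j+s)) w ↔ (s = 0 ∨ s = n)) := by
      intro s hs
      constructor
      · intro h
        by_contra hcon
        push_neg at hcon
        exact hjmax (j+s) (by omega) (by omega) (X.adj_symm h)
      · intro h
        rcases h with rfl | rfl
        · simpa using X.adj_symm hj
        · rw [hkj]; exact hwadj
    have hcinj : Function.Injective c := by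
      intro a b hEq
      by_cases hA1 : a.val = n+1 <;> by_cases hB1 : b.val = n+1
      · exact Fin.ext (by omega)
      · rw [hcw a hA1, hcval b hB1] at hEq
        exact absurd hEq (hwne (j + b.val) (by omega))
      · rw [hcval a hA1, hcw b hB1] at hEq
        exact absurd hEq.symm (hwne (j + a.val) (by omega))
      · rw [hcval a hA1, hcval b hB1] at hEq
        have := hinj (j + a.val) (by omega) (j + b.val) (by omega) hEq
        exact Fin.ext (by omega)
    have hiff : ∀ a b : Fin (n+2), X.Adj (c a) (c b) ↔ (cycleGraph (n+2)).Adj a b := by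
      intro a b
      have hA := a.isLt
      have hB := b.isLt
      rw [cycle_adj_iff]
      by_cases hA1 : a.val = n+1 <;> by_cases hB1 : b.val = n+1
      · rw [hcw a hA1, hcw b hB1]
        constructor
        · intro h; exact absurd h (X.irrefl)
        · intro h; omega
      · rw [hcw a hA1, hcval b hB1, X.adj_comm, hwf b.val (by omega)]
        omega
      · rw [hcval a hA1, hcw b hB1, hwf a.val (by omega)]
        omega
      · rw [hcval a hA1, hcval b hB1, hcf a.val b.val (by omega) (by omega)]
        omega
    exact (hchordal (n+2) (by omega)).false
      ⟨⟨c, hcinj⟩, fun {a b} => hiff a b⟩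
  · push_neg at hB
    refine ⟨fun i => if i = k+1 then w else f i, ?_, ?_, ?_⟩
    · intro i hi j hj hEq
      beta_reduce at hEq
      by_cases h1 : i = k+1 <;> by_cases h2 : j = k+1
      · omega
      · rw [if_pos h1, if_neg h2] at hEq
        exact absurd hEq (hwne j (by omega))
      · rw [if_neg h1, if_pos h2] at hEq
        exact absurd hEq.symm (hwne i (by omega))
      · rw [if_neg h1, if_neg h2] at hEq
        exact hinj i (by omega) j (by omega) hEq
    · intro i hi
      beta_reduce
      by_cases h0 : i = k
      · subst h0
        rw [if_neg (by omega), if_pos rfl]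
        exact hwadj
      · rw [if_neg (by omega), if_neg (by omega)]
        exact hedg i (by omega)
    · intro i hi j hj hij
      beta_reduce
      by_cases h2 : j = k+1
      · rw [if_neg (by omega), if_pos h2]
        exact fun h => hB i (by omega) (X.adj_symm h)
      · rw [if_neg (by omega), if_neg h2]
        exact hnadj i (by omega) j (by omega) hij

lemma dist_step' {V : Type*} (X : SimpleGraph V) {a b v : V} (h : X.Adj a b)
    (hr : X.Reachable b v) : X.dist a v ≤ X.dist b v + 1 := by
  obtain ⟨p, hp⟩ := hr.exists_walk_length_eq_dist
  calc X.dist a v ≤ (Walk.cons h p).length := X.dist_le _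
    _ = X.dist b v + 1 := by simp [hp]

lemma geo {V : Type*} (X : SimpleGraph V) :
    ∀ (d : ℕ) (u v : V), X.Reachable u v → X.dist u v = d →
    ∃ f : ℕ → V, f 0 = u ∧ (∀ i < d, X.Adj (f i) (f (i+1))) ∧
      (∀ i ≤ d, X.Reachable (f i) v ∧ X.dist (f i) v = d - i) := by
  intro d
  induction d with
  | zero =>
    intro u v hr hd
    have : u = v := (hr.dist_eq_zero_iff).mp hd
    subst this
    exact ⟨fun _ => u, rfl, by omega, fun i hi => by simpa using hr⟩
  | succ d ih =>
    intro u v hr hd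
    obtain ⟨p, hp⟩ := hr.exists_walk_length_eq_dist
    rw [hd] at hp
    cases p with
    | nil => simp at hp
    | @cons _ b _ h q =>
      have hq : q.length = d := by simpa using hp
      have hrb : X.Reachable b v := ⟨q⟩
      have hdb : X.dist b v = d := by
        have h1 : X.dist b v ≤ d := hq ▸ X.dist_le q
        have h2 : X.dist u v ≤ X.dist b v + 1 := dist_step' X h hrb
        omega
      obtain ⟨g, hg0, hge, hgd⟩ := ih b v hrb hdb
      refine ⟨fun i => if i = 0 then u else g (i - 1), rfl, ?_, ?_⟩
      · intro i hi
        by_cases h0 : i = 0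
        · subst h0
          simpa [hg0] using h
        · have h1 : i - 1 < d := by omega
          have := hge (i-1) h1
          have e1 : i - 1 + 1 = i := by omega
          rw [e1] at this
          simpa [h0] using this
      · intro i hi
        by_cases h0 : i = 0
        · subst h0
          simp only [if_pos rfl]
          exact ⟨hr, by simp [hd]⟩
        · have h1 : i - 1 ≤ d := by omega
          have := hgd (i-1) h1
          have e2 : d - (i - 1) = d + 1 - i := by omega
          rw [e2] at this
          simpa [h0] using this

lemma no_ip {V : Type*} [Fintype V] (X : SimpleGraph V) (P Q : Set V)
    (hbip : IsBipartition X P Q)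
    (hchordal : NoLongInducedCycle X)
    (hreg : ∀ u v : V, ((u ∈ P ∧ v ∈ P) ∨ (u ∈ Q ∧ v ∈ Q)) →
      (X.neighborSet u).ncard = (X.neighborSet v).ncard)
    {f : ℕ → V} {k : ℕ} (hk : 3 ≤ k) (hf : IP X f k) : False := by
  have grow : ∀ t : ℕ, ∃ g, IP X g (k + t) := by
    intro t
    induction t with
    | zero => exact ⟨f, hf⟩
    | succ t ih =>
      obtain ⟨g, hg⟩ := ih
      obtain ⟨g', hg'⟩ := extend_ip X P Q hbip hchordal hreg (by omega) hg
      exact ⟨g', hg'⟩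
  obtain ⟨g, hg⟩ := grow (Fintype.card V)
  have hinj : Function.Injective (fun i : Fin (k + Fintype.card V + 1) => g i.val) := by
    intro a b hEq
    exact Fin.ext (hg.1 a.val (by omega) b.val (by omega) hEq)
  have := Fintype.card_le_of_injective _ hinj
  simp [Fintype.card_fin] at this

theorem stmt_0 {V : Type*} [Fintype V] (X : SimpleGraph V) (P Q : Set V)
    (hbip : IsBipartition X P Q)
    (hedge : ∃ u v, X.Adj u v)
    (hchordal : NoLongInducedCycle X)
    (hbiregP : ∀ u ∈ P, ∀ v ∈ P, (X.neighborSet u).ncard = (X.neighborSet v).ncard)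
    (hbiregQ : ∀ u ∈ Q, ∀ v ∈ Q, (X.neighborSet u).ncard = (X.neighborSet v).ncard) :
    ∃ a b : ℕ, 1 ≤ a ∧ 1 ≤ b ∧
      ∀ C : X.ConnectedComponent,
        (C.supp ∩ P).ncard = a ∧ (C.supp ∩ Q).ncard = b ∧
        ∀ u ∈ C.supp ∩ P, ∀ v ∈ C.supp ∩ Q, X.Adj u v := by
  classical
  have hopp : ∀ {x y : V}, X.Adj x y → (x ∈ P ↔ y ∉ P) := by
    intro x y h
    have hd := Set.disjoint_left.mp hbip.2.1
    rcases hbip.2.2 x y h with ⟨hx, hy⟩ | ⟨hx, hy⟩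
    · exact ⟨fun _ => fun hyP => hd hyP hy, fun _ => hx⟩
    · exact ⟨fun hxP => absurd hx (hd hxP), fun hyn => absurd hy hyn⟩
  have hreg : ∀ u v : V, ((u ∈ P ∧ v ∈ P) ∨ (u ∈ Q ∧ v ∈ Q)) →
      (X.neighborSet u).ncard = (X.neighborSet v).ncard := by
    rintro u v (⟨h1, h2⟩ | ⟨h1, h2⟩)
    · exact hbiregP u h1 v h2
    · exact hbiregQ u h1 v h2
  -- complete bipartite within each component
  have Hcomp : ∀ (C : X.ConnectedComponent), ∀ u ∈ C.supp ∩ P, ∀ v ∈ C.supp ∩ Q, X.Adj u v := by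
    rintro C u ⟨huC, huP⟩ v ⟨hvC, hvQ⟩
    rw [ConnectedComponent.mem_supp_iff] at huC hvC
    have hreach : X.Reachable u v := ConnectedComponent.exact (huC.trans hvC.symm)
    by_contra hna
    have hne : u ≠ v := by
      intro h
      exact Set.disjoint_left.mp hbip.2.1 huP (h ▸ hvQ)
    set d := X.dist u v with hddef
    obtain ⟨f, hf0, hfe, hfd⟩ := geo X d u v hreach rfl
    have hd0 : d ≠ 0 := by
      intro h
      exact hne ((hreach.dist_eq_zero_iff).mp h)
    have hd1 : d ≠ 1 := by
      intro h
      exact hna ((X.dist_eq_one_iff_adj).mp h)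
    have hd2 : d ≠ 2 := by
      intro h
      have a1 := hfe 0 (by omega)
      have a2 := hfe 1 (by omega)
      have hf2 : f 2 = v := by
        have := hfd 2 (by omega)
        rw [h] at this
        exact (this.1.dist_eq_zero_iff).mp (by omega)
      rw [hf0] at a1
      have s1 : f 1 ∉ P := (hopp a1).mp huP
      have s2 : f 1 ∈ P := by
        have := hopp a2
        rw [hf2] at this
        have hvnP : v ∉ P := fun hvP => Set.disjoint_left.mp hbip.2.1 hvP hvQ
        tauto
      exact s1 s2
    have hip : IP X f d := by
      refine ⟨?_, hfe, ?_⟩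
      · intro i hi j hj hEq
        have h1 := (hfd i hi).2
        have h2 := (hfd j hj).2
        rw [hEq] at h1
        omega
      · intro i hi j hj hij hadj
        have h1 := (hfd i hi).2
        have h2 := (hfd j hj).2
        have := dist_step' X hadj (hfd j hj).1
        omega
    exact no_ip X P Q hbip hchordal hreg (by omega) hip
  -- pick the base edge with sides
  obtain ⟨u0, v0, hu0P, hv0Q, huv⟩ : ∃ u v, u ∈ P ∧ v ∈ Q ∧ X.Adj u v := by
    obtain ⟨u, v, h⟩ := hedge
    rcases hbip.2.2 u v h with ⟨h1, h2⟩ | ⟨h1, h2⟩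
    · exact ⟨u, v, h1, h2, h⟩
    · exact ⟨v, u, h2, h1, X.adj_symm h⟩
  refine ⟨(X.neighborSet v0).ncard, (X.neighborSet u0).ncard, ?_, ?_, ?_⟩
  · have : (X.neighborSet v0).Nonempty := ⟨u0, X.adj_symm huv⟩
    have := Set.ncard_pos (Set.toFinite _) |>.mpr this
    omega
  · have : (X.neighborSet u0).Nonempty := ⟨v0, huv⟩
    have := Set.ncard_pos (Set.toFinite _) |>.mpr this
    omega
  · intro C
    obtain ⟨x, hx⟩ := C.exists_rep
    have hsupp : ∀ {y z : V}, X.Adj y z → y ∈ C.supp → z ∈ C.supp := by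
      intro y z h hy
      rw [ConnectedComponent.mem_supp_iff] at hy ⊢
      rw [← hy]
      exact ConnectedComponent.sound (X.adj_symm h).reachable
    have hxC : x ∈ C.supp := by rw [ConnectedComponent.mem_supp_iff]; exact hx
    have hnbr : ∀ y : V, ∃ z, X.Adj y z := by
      intro y
      have hpos : 0 < (X.neighborSet y).ncard := by
        have hcard : (X.neighborSet y).ncard = (X.neighborSet u0).ncard ∨
            (X.neighborSet y).ncard = (X.neighborSet v0).ncard := by
          rcases hbip.1 y with hy | hy
          · exact Or.inl (hreg y u0 (Or.inl ⟨hy, hu0P⟩))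
          · exact Or.inr (hreg y v0 (Or.inr ⟨hy, hv0Q⟩))
        have h1 : (X.neighborSet u0).Nonempty := ⟨v0, huv⟩
        have h2 : (X.neighborSet v0).Nonempty := ⟨u0, X.adj_symm huv⟩
        have := Set.ncard_pos (s := X.neighborSet u0) (Set.toFinite _) |>.mpr h1
        have := Set.ncard_pos (s := X.neighborSet v0) (Set.toFinite _) |>.mpr h2
        omega
      obtain ⟨z, hz⟩ := (Set.ncard_pos (Set.toFinite _)).mp hpos
      exact ⟨z, hz⟩
    have hPn : ∃ p, p ∈ C.supp ∩ P := by
      rcases hbip.1 x with hxP | hxQ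
      · exact ⟨x, hxC, hxP⟩
      · obtain ⟨z, hz⟩ := hnbr x
        rcases hbip.2.2 x z hz with ⟨h1, _⟩ | ⟨_, h2⟩
        · exact (Set.disjoint_left.mp hbip.2.1 h1 hxQ).elim
        · exact ⟨z, hsupp hz hxC, h2⟩
    have hQn : ∃ q, q ∈ C.supp ∩ Q := by
      rcases hbip.1 x with hxP | hxQ
      · obtain ⟨z, hz⟩ := hnbr x
        rcases hbip.2.2 x z hz with ⟨_, h2⟩ | ⟨h1, _⟩
        · exact ⟨z, hsupp hz hxC, h2⟩
        · exact (Set.disjoint_left.mp hbip.2.1 hxP h1).elim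
      · exact ⟨x, hxC, hxQ⟩
    obtain ⟨p0, hp0C, hp0P⟩ := hPn
    obtain ⟨q0, hq0C, hq0Q⟩ := hQn
    have hQeq : C.supp ∩ Q = X.neighborSet p0 := by
      ext z
      simp only [Set.mem_inter_iff, mem_neighborSet]
      constructor
      · rintro ⟨hzC, hzQ⟩
        exact Hcomp C p0 ⟨hp0C, hp0P⟩ z ⟨hzC, hzQ⟩
      · intro hz
        refine ⟨hsupp hz hp0C, ?_⟩
        rcases hbip.2.2 p0 z hz with ⟨_, h2⟩ | ⟨h1, _⟩
        · exact h2
        · exact (Set.disjoint_left.mp hbip.2.1 hp0P h1).elim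
    have hPeq : C.supp ∩ P = X.neighborSet q0 := by
      ext z
      simp only [Set.mem_inter_iff, mem_neighborSet]
      constructor
      · rintro ⟨hzC, hzP⟩
        exact X.adj_symm (Hcomp C z ⟨hzC, hzP⟩ q0 ⟨hq0C, hq0Q⟩)
      · intro hz
        refine ⟨hsupp hz hq0C, ?_⟩
        rcases hbip.2.2 q0 z hz with ⟨h1, _⟩ | ⟨_, h2⟩
        · exact (Set.disjoint_left.mp hbip.2.1 h1 hq0Q).elim
        · exact h2
    refine ⟨?_, ?_, Hcomp C⟩
    · rw [hPeq]
      exact hreg q0 v0 (Or.inr ⟨hq0Q, hv0Q⟩)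
    · rw [hQeq]
      exact hreg p0 u0 (Or.inl ⟨hp0P, hu0P⟩)
end

section
/- Let X be a bipartite graph with bipartition parts P and Q that has at least one edge, contains no induced cycle of length at least 6, and is biregular with respect to (P,Q). Suppose α ∈ P and β ∈ Q are adjacent bisimplicial vertices. Then the connected component of X containing α has vertex set N(α) ∪ N(β) (where N denotes the neighborhood), and this component is complete bipartite: every vertex of N(β) is adjacent to every vertex of N(α). -/
open SimpleGraph

theorem stmt_1 {V : Type*} [Fintype V] (X : SimpleGraph V) (P Q : Set V)
    (hbip : IsBipartition X P Q)
    (hedge : ∃ u v, X.Adj u v)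
    (hchordal : NoLongInducedCycle X)
    (hbiregP : ∀ u ∈ P, ∀ v ∈ P, (X.neighborSet u).ncard = (X.neighborSet v).ncard)
    (hbiregQ : ∀ u ∈ Q, ∀ v ∈ Q, (X.neighborSet u).ncard = (X.neighborSet v).ncard)
    (α β : V) (hα : α ∈ P) (hβ : β ∈ Q) (hadj : X.Adj α β)
    (hbisimp : ∀ u ∈ X.neighborSet α, ∀ v ∈ X.neighborSet β, X.Adj u v) :
    (X.connectedComponentMk α).supp = X.neighborSet α ∪ X.neighborSet β ∧
      ∀ u ∈ X.neighborSet β, ∀ v ∈ X.neighborSet α, X.Adj u v := by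
  obtain ⟨hcov, hdisj, hside⟩ := hbip
  -- neighbors of β lie in P, neighbors of α lie in Q
  have hNβP : ∀ v ∈ X.neighborSet β, v ∈ P := by
    intro v hv
    rcases hside β v hv with ⟨h1, _⟩ | ⟨_, h2⟩
    · exact absurd hβ (Set.disjoint_left.mp hdisj h1)
    · exact h2
  have hNαQ : ∀ v ∈ X.neighborSet α, v ∈ Q := by
    intro v hv
    rcases hside α v hv with ⟨_, h2⟩ | ⟨h1, _⟩
    · exact h2
    · exact absurd hα (Set.disjoint_right.mp hdisj h1)
  -- every neighbor of β has the same neighborhood as α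
  have hNu : ∀ u ∈ X.neighborSet β, X.neighborSet u = X.neighborSet α := by
    intro u hu
    have hsub : X.neighborSet α ⊆ X.neighborSet u :=
      fun v hv => (hbisimp v hv u hu).symm
    have hcard := hbiregP u (hNβP u hu) α hα
    exact (Set.eq_of_subset_of_ncard_le hsub hcard.le).symm
  have hNv : ∀ v ∈ X.neighborSet α, X.neighborSet v = X.neighborSet β := by
    intro v hv
    have hsub : X.neighborSet β ⊆ X.neighborSet v :=
      fun u hu => hbisimp v hv u hu
    have hcard := hbiregQ v (hNαQ v hv) β hβ
    exact (Set.eq_of_subset_of_ncard_le hsub hcard.le).symm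
  set S : Set V := X.neighborSet α ∪ X.neighborSet β with hS
  have hclosed : ∀ u ∈ S, ∀ w, X.Adj u w → w ∈ S := by
    intro u hu w hw
    rcases hu with hu | hu
    · right
      rw [← hNv u hu]
      exact hw
    · left
      rw [← hNu u hu]
      exact hw
  have hαS : α ∈ S := Or.inr hadj.symm
  have key : ∀ a c, X.Walk a c → a ∈ S → c ∈ S := by
    intro a c q
    induction q with
    | nil => exact id
    | cons h p ih => exact fun ha => ih (hclosed _ ha _ h)
  have hreach : ∀ c, X.Reachable α c → c ∈ S := by
    intro c hc
    obtain ⟨p⟩ := hc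
    exact key α c p hαS
  constructor
  · ext c
    simp only [ConnectedComponent.mem_supp_iff, ConnectedComponent.eq]
    constructor
    · intro h
      exact hreach c h.symm
    · intro hc
      rcases hc with hc | hc
      · exact (X.adj_symm hc).reachable
      · exact ((X.adj_symm hc).reachable.trans hadj.symm.reachable)
  · intro u hu v hv
    exact (hbisimp v hv u hu).symm
end

section
/- Let (Ω,S) be a coherent configuration and X a simple graph with vertex set Ω such that (Ω,S) is compatible with X. Let Δ be a fiber of (Ω,S) and suppose {α} is a singleton fiber of (Ω,S) for some α ∈ Ω. Then the graph distance in X from α to δ (valued in ℕ ∪ {∞}) is the same for all δ ∈ Δ. -/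
open SimpleGraph

/-- A coherent configuration on a set `Ω`: a partition `S` of `Ω × Ω` into nonempty
binary relations such that the diagonal is a union of elements of `S`, the converse of
every element of `S` belongs to `S`, and the intersection numbers are well defined. -/
structure CoherentConfiguration (Ω : Type*) where
  S : Set (Set (Ω × Ω))
  nonempty_mem : ∀ s ∈ S, s.Nonempty
  partition : ∀ p : Ω × Ω, ∃! s, s ∈ S ∧ p ∈ s
  diag_union : ∀ s ∈ S, (∃ p ∈ s, p.1 = p.2) → ∀ p ∈ s, p.1 = p.2
  converse_mem : ∀ s ∈ S, {p : Ω × Ω | (p.2, p.1) ∈ s} ∈ S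
  regularity : ∀ r ∈ S, ∀ s ∈ S, ∀ t ∈ S, ∀ p ∈ t, ∀ q ∈ t,
    {γ : Ω | (p.1, γ) ∈ r ∧ (γ, p.2) ∈ s}.ncard =
      {γ : Ω | (q.1, γ) ∈ r ∧ (γ, q.2) ∈ s}.ncard

/-- `Δ` is a fiber of the coherent configuration, i.e. `{(δ,δ) : δ ∈ Δ} ∈ S`. -/
def CoherentConfiguration.IsFiber {Ω : Type*} (C : CoherentConfiguration Ω)
    (Δ : Set Ω) : Prop :=
  {p : Ω × Ω | p.1 = p.2 ∧ p.1 ∈ Δ} ∈ C.S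

/-- The coherent configuration is compatible with the graph `X`: the arc set of `X`
is a union of elements of `S`. -/
def CoherentConfiguration.Compatible {Ω : Type*} (C : CoherentConfiguration Ω)
    (X : SimpleGraph Ω) : Prop :=
  ∀ s ∈ C.S, (∃ p ∈ s, X.Adj p.1 p.2) → ∀ p ∈ s, X.Adj p.1 p.2

/-- The vertex `α` is distinguished in the coherent configuration: `{(α,α)} ∈ S`. -/
def CoherentConfiguration.Distinguished {Ω : Type*} (C : CoherentConfiguration Ω)
    (α : Ω) : Prop :=
  ({(α, α)} : Set (Ω × Ω)) ∈ C.S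

/-- The equivalence relation `e_{Δ,Γ}` on `Δ`: two vertices of `Δ` are equivalent iff
they have the same neighbors in `Γ`; viewed as a set of pairs. -/
def eRel {V : Type*} (X : SimpleGraph V) (Δ Γ : Set V) : Set (V × V) :=
  {p | p.1 ∈ Δ ∧ p.2 ∈ Δ ∧ X.neighborSet p.1 ∩ Γ = X.neighborSet p.2 ∩ Γ}

/-- The number `‖e_{Δ,Γ}‖` of classes of the equivalence relation `e_{Δ,Γ}`,
i.e. the number of distinct sets of the form `N(δ) ∩ Γ` for `δ ∈ Δ`. -/
noncomputable def numClasses {V : Type*} (X : SimpleGraph V) (Δ Γ : Set V) : ℕ :=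
  ((fun δ => X.neighborSet δ ∩ Γ) '' Δ).ncard

/-- In a finite coherent configuration with singleton fiber `{α}`, every pair in the
class of a pair `(α, δ)` has first coordinate `α`. -/
lemma fst_eq_of_mem_class {Ω : Type*} [Fintype Ω] (C : CoherentConfiguration Ω)
    (α : Ω) (hα : C.IsFiber {α}) {s : Set (Ω × Ω)} (hs : s ∈ C.S) {δ : Ω}
    (hδ : (α, δ) ∈ s) : ∀ p ∈ s, p.1 = α := by
  intro p hp
  have hreg := C.regularity _ hα s hs s hs (α, δ) hδ p hp
  have hL : {γ : Ω | ((α, δ).1, γ) ∈ {q : Ω × Ω | q.1 = q.2 ∧ q.1 ∈ ({α} : Set Ω)} ∧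
      (γ, (α, δ).2) ∈ s} = {α} := by
    ext γ
    constructor
    · rintro ⟨⟨h1, _⟩, _⟩; exact h1.symm
    · rintro hm
      have hga : γ = α := hm
      subst hga
      exact ⟨⟨rfl, rfl⟩, hδ⟩
  rw [hL, Set.ncard_singleton] at hreg
  have hne : {γ : Ω | ((p.1 : Ω), γ) ∈ {q : Ω × Ω | q.1 = q.2 ∧ q.1 ∈ ({α} : Set Ω)} ∧
      (γ, p.2) ∈ s}.Nonempty := by
    rw [← Set.ncard_pos (Set.toFinite _), ← hreg]; norm_num
  obtain ⟨γ, ⟨h1, h2⟩, _⟩ := hne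
  exact h2

/-- Key lemma: if `(α,γ)` and `(α,γ')` lie in the same class of a coherent configuration
compatible with `X`, and `{α}` is a fiber, then `edist α γ ≤ n` implies `edist α γ' ≤ n`. -/
lemma edist_le_of_mem_class {Ω : Type*} [Fintype Ω] (C : CoherentConfiguration Ω)
    (X : SimpleGraph Ω) (hcomp : C.Compatible X) (α : Ω) (hα : C.IsFiber {α}) :
    ∀ n : ℕ, ∀ s ∈ C.S, ∀ γ γ' : Ω, (α, γ) ∈ s → (α, γ') ∈ s →
      X.edist α γ ≤ n → X.edist α γ' ≤ n := by
  intro n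
  induction n with
  | zero =>
    intro s hs γ γ' hγ hγ' hle
    have h0 : X.edist α γ = 0 := le_antisymm (by exact_mod_cast hle) zero_le
    have hγα : γ = α := (edist_eq_zero_iff.mp h0).symm
    have hd : α = γ' := C.diag_union s hs ⟨(α, γ), hγ, hγα.symm⟩ _ hγ'
    rw [← hd, SimpleGraph.edist_self]
    exact zero_le
  | succ n ih =>
    intro s hs γ γ' hγ hγ' hle
    by_cases hγα : γ = α
    · have hd : α = γ' := C.diag_union s hs ⟨(α, γ), hγ, hγα.symm⟩ _ hγ'
      rw [← hd, SimpleGraph.edist_self]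
      exact zero_le
    · -- extract a walk γ → α of length ≤ n+1
      have hne : X.edist γ α ≠ ⊤ := by
        rw [SimpleGraph.edist_comm]
        intro h
        rw [h, top_le_iff] at hle
        exact ENat.coe_ne_top _ hle
      obtain ⟨w, hw⟩ := exists_walk_of_edist_ne_top hne
      have hwlen : (w.length : ℕ∞) ≤ (n + 1 : ℕ) := by
        rw [hw, SimpleGraph.edist_comm]; exact hle
      cases w with
      | nil => exact absurd rfl hγα
      | @cons _ b _ hadj q =>
        have hq : X.edist α b ≤ (n : ℕ∞) := by
          have h1 : X.edist α b ≤ (q.length : ℕ∞) := by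
            simpa [SimpleGraph.Walk.length_reverse] using SimpleGraph.edist_le q.reverse
          have h2 : (q.length : ℕ∞) ≤ n := by
            simp only [Walk.length_cons] at hwlen
            exact_mod_cast Nat.le_of_succ_le_succ (by exact_mod_cast hwlen)
          exact h1.trans h2
        obtain ⟨r₀, ⟨hr₀, hbr₀⟩, _⟩ := C.partition (α, b)
        obtain ⟨s₀, ⟨hs₀, hbs₀⟩, _⟩ := C.partition (b, γ)
        have hreg := C.regularity r₀ hr₀ s₀ hs₀ s hs (α, γ) hγ (α, γ') hγ'
        have hLne : {e : Ω | ((α, γ).1, e) ∈ r₀ ∧ (e, (α, γ).2) ∈ s₀}.Nonempty :=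
          ⟨b, hbr₀, hbs₀⟩
        have hRne : {e : Ω | ((α, γ').1, e) ∈ r₀ ∧ (e, (α, γ').2) ∈ s₀}.Nonempty := by
          rw [← Set.ncard_pos (Set.toFinite _), ← hreg,
            Set.ncard_pos (Set.toFinite _)]
          exact hLne
        obtain ⟨β', hβr, hβs⟩ := hRne
        have hβdist : X.edist α β' ≤ (n : ℕ∞) := ih r₀ hr₀ b β' hbr₀ hβr hq
        have hβadj : X.Adj β' γ' :=
          hcomp s₀ hs₀ ⟨(b, γ), hbs₀, hadj.symm⟩ (β', γ') hβs
        calc X.edist α γ' ≤ X.edist α β' + X.edist β' γ' := SimpleGraph.edist_triangle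
          _ ≤ (n : ℕ∞) + 1 := add_le_add hβdist (le_of_eq (edist_eq_one_iff_adj.mpr hβadj))
          _ = ((n + 1 : ℕ) : ℕ∞) := by push_cast; ring

lemma edist_eq_of_mem_class {Ω : Type*} [Fintype Ω] (C : CoherentConfiguration Ω)
    (X : SimpleGraph Ω) (hcomp : C.Compatible X) (α : Ω) (hα : C.IsFiber {α})
    {s : Set (Ω × Ω)} (hs : s ∈ C.S) {γ γ' : Ω} (hγ : (α, γ) ∈ s) (hγ' : (α, γ') ∈ s) :
    X.edist α γ = X.edist α γ' := by
  have key : ∀ a b : Ω, (α, a) ∈ s → (α, b) ∈ s → X.edist α b ≤ X.edist α a := by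
    intro a b ha hb
    rcases eq_or_ne (X.edist α a) ⊤ with h | h
    · simp [h]
    · obtain ⟨k, hk⟩ := Option.ne_none_iff_exists'.mp h
      rw [hk]
      exact edist_le_of_mem_class C X hcomp α hα k s hs a b ha hb (le_of_eq hk)
  exact le_antisymm (key γ' γ hγ' hγ) (key γ γ' hγ hγ')

theorem stmt_3 {Ω : Type*} [Fintype Ω] (C : CoherentConfiguration Ω) (X : SimpleGraph Ω)
    (hcomp : C.Compatible X) (Δ : Set Ω) (hΔ : C.IsFiber Δ)
    (α : Ω) (hα : C.IsFiber {α}) :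
    ∀ δ ∈ Δ, ∀ δ' ∈ Δ, X.edist α δ = X.edist α δ' := by
  intro δ hδ δ' hδ'
  obtain ⟨s, ⟨hs, hαδ⟩, -⟩ := C.partition (α, δ)
  set r : Set (Ω × Ω) := {p : Ω × Ω | (p.2, p.1) ∈ s} with hr
  have hrS : r ∈ C.S := C.converse_mem s hs
  have hreg := C.regularity r hrS s hs _ hΔ (δ, δ) ⟨rfl, hδ⟩ (δ', δ') ⟨rfl, hδ'⟩
  have hLne : {γ : Ω | (((δ, δ) : Ω × Ω).1, γ) ∈ r ∧ (γ, ((δ, δ) : Ω × Ω).2) ∈ s}.Nonempty :=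
    ⟨α, hαδ, hαδ⟩
  have hRne : {γ : Ω | (((δ', δ') : Ω × Ω).1, γ) ∈ r ∧ (γ, ((δ', δ') : Ω × Ω).2) ∈ s}.Nonempty := by
    rw [← Set.ncard_pos (Set.toFinite _), ← hreg, Set.ncard_pos (Set.toFinite _)]
    exact hLne
  obtain ⟨γ₀, -, hγs⟩ := hRne
  have hγα : γ₀ = α := fst_eq_of_mem_class C α hα hs hαδ (γ₀, δ') hγs
  subst hγα
  exact edist_eq_of_mem_class C X hcomp γ₀ hα hs hαδ hγs
end

section
/- Let X be a connected bipartite graph with bipartition parts P and Q, let α be a vertex of X, and let (Ω,S) be a coherent configuration on the vertex set Ω of X that is compatible with X and in which α is distinguished (i.e., {(α,α)} ∈ S). Then every fiber of (Ω,S) is contained in P or contained in Q; in particular, for every fiber Δ, the subgraph of X induced by Δ has no edges. -/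
open SimpleGraph

lemma aux_first_coord {Ω : Type*} [Fintype Ω] {C : CoherentConfiguration Ω} {α : Ω}
    (hdist : C.Distinguished α) {s : Set (Ω × Ω)} (hs : s ∈ C.S)
    {β : Ω} (hβ : (α, β) ∈ s) : ∀ p ∈ s, p.1 = α := by
  intro p hp
  have hsc : {q : Ω × Ω | (q.2, q.1) ∈ s} ∈ C.S := C.converse_mem s hs
  have hβα : ((β, α) : Ω × Ω) ∈ {q : Ω × Ω | (q.2, q.1) ∈ s} := hβ
  have hpc : ((p.2, p.1) : Ω × Ω) ∈ {q : Ω × Ω | (q.2, q.1) ∈ s} := hp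
  have reg : {γ : Ω | (β, γ) ∈ {q : Ω × Ω | (q.2, q.1) ∈ s} ∧ (γ, α) ∈ ({((α : Ω), α)} : Set (Ω × Ω))}.ncard
      = {γ : Ω | (p.2, γ) ∈ {q : Ω × Ω | (q.2, q.1) ∈ s} ∧ (γ, p.1) ∈ ({((α : Ω), α)} : Set (Ω × Ω))}.ncard :=
    C.regularity _ hsc _ hdist _ hsc (β, α) hβα (p.2, p.1) hpc
  have h1 : {γ : Ω | (β, γ) ∈ {q : Ω × Ω | (q.2, q.1) ∈ s} ∧ (γ, α) ∈ ({((α : Ω), α)} : Set (Ω × Ω))} = {α} := by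
    ext γ
    simp only [Set.mem_setOf_eq, Set.mem_singleton_iff, Prod.mk.injEq]
    constructor
    · rintro ⟨-, h, -⟩; exact h
    · rintro rfl; exact ⟨hβ, rfl, trivial⟩
  rw [h1, Set.ncard_singleton] at reg
  obtain ⟨γ, -, hγ2⟩ := Set.nonempty_of_ncard_ne_zero (by rw [← reg]; exact one_ne_zero)
  have : (γ, p.1) = ((α, α) : Ω × Ω) := hγ2
  exact (Prod.ext_iff.mp this).2

lemma aux_same_rel {Ω : Type*} [Fintype Ω] {C : CoherentConfiguration Ω} {α : Ω}
    (hdist : C.Distinguished α) {t : Set (Ω × Ω)} (ht : t ∈ C.S)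
    {p q : Ω × Ω} (hp : p ∈ t) (hq : q ∈ t)
    {s : Set (Ω × Ω)} (hs : s ∈ C.S) (hps : (α, p.1) ∈ s) : (α, q.1) ∈ s := by
  obtain ⟨u, ⟨hu, hu2⟩, -⟩ := C.partition (α, p.2)
  have hsc : {q : Ω × Ω | (q.2, q.1) ∈ s} ∈ C.S := C.converse_mem s hs
  have reg : {γ : Ω | (p.1, γ) ∈ {r : Ω × Ω | (r.2, r.1) ∈ s} ∧ (γ, p.2) ∈ u}.ncard
      = {γ : Ω | (q.1, γ) ∈ {r : Ω × Ω | (r.2, r.1) ∈ s} ∧ (γ, q.2) ∈ u}.ncard :=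
    C.regularity _ hsc _ hu _ ht p hp q hq
  have h1 : {γ : Ω | (p.1, γ) ∈ {r : Ω × Ω | (r.2, r.1) ∈ s} ∧ (γ, p.2) ∈ u} = {α} := by
    ext γ
    simp only [Set.mem_setOf_eq, Set.mem_singleton_iff]
    constructor
    · rintro ⟨-, h2⟩; exact aux_first_coord hdist hu hu2 (γ, p.2) h2
    · rintro rfl; exact ⟨hps, hu2⟩
  rw [h1, Set.ncard_singleton] at reg
  obtain ⟨γ, hγ1, hγ2⟩ := Set.nonempty_of_ncard_ne_zero (by rw [← reg]; exact one_ne_zero)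
  have hγα : γ = α := aux_first_coord hdist hu hu2 (γ, q.2) hγ2
  subst hγα
  exact hγ1

lemma aux_dist {Ω : Type*} [Fintype Ω] {C : CoherentConfiguration Ω} {α : Ω}
    {X : SimpleGraph Ω} (hconn : X.Connected) (hcomp : C.Compatible X)
    (hdist : C.Distinguished α) :
    ∀ k : ℕ, ∀ s ∈ C.S, ∀ δ δ' : Ω, (α, δ) ∈ s → (α, δ') ∈ s →
      X.dist α δ = k → X.dist α δ' = k := by
  intro k
  induction k using Nat.strong_induction_on with
  | _ k ih =>
  intro s hs δ δ' hδ hδ' hk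
  rcases Nat.eq_zero_or_pos k with rfl | hkpos
  · have hδα : α = δ := (hconn.dist_eq_zero_iff).mp hk
    subst hδα
    obtain ⟨u, -, huniq⟩ := C.partition (α, α)
    have h1 : s = ({(α, α)} : Set (Ω × Ω)) := by
      rw [huniq s ⟨hs, hδ⟩, huniq _ ⟨hdist, rfl⟩]
    rw [h1] at hδ'
    have h2 : δ' = α := (Prod.ext_iff.mp (by exact hδ' : ((α, δ') : Ω × Ω) = (α, α))).2
    subst h2
    exact hconn.dist_eq_zero_iff.mpr rfl
  · obtain ⟨w, hw⟩ := (hconn.preconnected α δ).exists_walk_length_eq_dist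
    have hnil : ¬ w.reverse.Nil := by
      rw [SimpleGraph.Walk.not_nil_iff_lt_length, SimpleGraph.Walk.length_reverse, hw, hk]
      exact hkpos
    obtain ⟨γ, hadj, q, hq⟩ := SimpleGraph.Walk.not_nil_iff.mp hnil
    have hlen : q.length = k - 1 := by
      have h3 := congrArg SimpleGraph.Walk.length hq
      rw [SimpleGraph.Walk.length_reverse, hw, hk, SimpleGraph.Walk.length_cons] at h3
      omega
    have hdγ : X.dist α γ = k - 1 := by
      have h1 : X.dist α γ ≤ k - 1 := by
        have h4 := SimpleGraph.dist_le q.reverse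
        rwa [SimpleGraph.Walk.length_reverse, hlen] at h4
      have h2 : X.dist α δ ≤ X.dist α γ + 1 := by
        obtain ⟨w2, hw2⟩ := (hconn.preconnected α γ).exists_walk_length_eq_dist
        have h5 := SimpleGraph.dist_le (w2.concat hadj.symm)
        rwa [SimpleGraph.Walk.length_concat, hw2] at h5
      omega
    obtain ⟨r, ⟨hr, hrγ⟩, -⟩ := C.partition (α, γ)
    obtain ⟨t, ⟨ht, htγδ⟩, -⟩ := C.partition (γ, δ)
    have htadj : ∀ p ∈ t, X.Adj p.1 p.2 := hcomp t ht ⟨(γ, δ), htγδ, hadj.symm⟩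
    have reg : {x : Ω | (α, x) ∈ r ∧ (x, δ) ∈ t}.ncard
        = {x : Ω | (α, x) ∈ r ∧ (x, δ') ∈ t}.ncard :=
      C.regularity r hr t ht s hs (α, δ) hδ (α, δ') hδ'
    have hne1 : {x : Ω | (α, x) ∈ r ∧ (x, δ) ∈ t}.Nonempty := ⟨γ, hrγ, htγδ⟩
    obtain ⟨x, hxr, hxt⟩ := Set.nonempty_of_ncard_ne_zero
      (s := {x : Ω | (α, x) ∈ r ∧ (x, δ') ∈ t})
      (by rw [← reg]; exact ((Set.ncard_pos (Set.toFinite _)).mpr hne1).ne')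
    have hdx : X.dist α x = k - 1 := ih (k - 1) (by omega) r hr γ x hrγ hxr hdγ
    have hadjx : X.Adj x δ' := htadj (x, δ') hxt
    have hle : X.dist α δ' ≤ k := by
      obtain ⟨w3, hw3⟩ := (hconn.preconnected α x).exists_walk_length_eq_dist
      have h6 := SimpleGraph.dist_le (w3.concat hadjx)
      rw [SimpleGraph.Walk.length_concat, hw3, hdx] at h6
      omega
    by_contra hne
    have hlt : X.dist α δ' < k := lt_of_le_of_ne hle hne
    have h7 := ih _ hlt s hs δ' δ hδ' hδ rfl
    omega

lemma walk_parity {V : Type*} {X : SimpleGraph V} {P Q : Set V} (hbip : IsBipartition X P Q) :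
    ∀ {u v : V} (w : X.Walk u v), ((u ∈ P) ↔ (v ∈ P)) ↔ Even w.length := by
  intro u v w
  induction w with
  | nil => simp
  | @cons a b c h p ih =>
    have hflip : a ∈ P ↔ b ∉ P := by
      rcases hbip.2.2 a b h with ⟨haP, hbQ⟩ | ⟨haQ, hbP⟩
      · exact ⟨fun _ hbP => Set.disjoint_left.mp hbip.2.1 hbP hbQ, fun _ => haP⟩
      · exact ⟨fun haP _ => Set.disjoint_left.mp hbip.2.1 haP haQ, fun hnb => absurd hbP hnb⟩
    rw [SimpleGraph.Walk.length_cons, Nat.even_add_one, ← ih]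
    by_cases hbm : b ∈ P <;> by_cases hcm : c ∈ P <;> simp_all

theorem stmt_4 {Ω : Type*} [Fintype Ω] (X : SimpleGraph Ω) (P Q : Set Ω)
    (hconn : X.Connected) (hbip : IsBipartition X P Q)
    (α : Ω) (C : CoherentConfiguration Ω)
    (hcomp : C.Compatible X) (hdist : C.Distinguished α) :
    ∀ Δ : Set Ω, C.IsFiber Δ →
      (Δ ⊆ P ∨ Δ ⊆ Q) ∧ ∀ u ∈ Δ, ∀ v ∈ Δ, ¬ X.Adj u v := by
  intro Δ hΔ
  obtain ⟨p0, heq0, hmem0⟩ := C.nonempty_mem _ hΔ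
  obtain ⟨s, ⟨hs, hsδ₀⟩, -⟩ := C.partition (α, p0.1)
  have hkey : ∀ δ ∈ Δ, (δ ∈ P ↔ p0.1 ∈ P) := by
    intro δ hδ
    have hδδ : ((δ, δ) : Ω × Ω) ∈ {p : Ω × Ω | p.1 = p.2 ∧ p.1 ∈ Δ} := ⟨rfl, hδ⟩
    have hδ0 : ((p0.1, p0.1) : Ω × Ω) ∈ {p : Ω × Ω | p.1 = p.2 ∧ p.1 ∈ Δ} := ⟨rfl, hmem0⟩
    have hsδ : (α, δ) ∈ s := aux_same_rel hdist hΔ hδ0 hδδ hs hsδ₀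
    have hd : X.dist α δ = X.dist α p0.1 :=
      aux_dist hconn hcomp hdist (X.dist α p0.1) s hs p0.1 δ hsδ₀ hsδ rfl
    obtain ⟨w1, hw1⟩ := (hconn.preconnected α δ).exists_walk_length_eq_dist
    obtain ⟨w0, hw0⟩ := (hconn.preconnected α p0.1).exists_walk_length_eq_dist
    have h1 := walk_parity hbip w1
    have h0 := walk_parity hbip w0
    rw [hw1, hd] at h1
    rw [hw0] at h0
    tauto
  constructor
  · by_cases h0 : p0.1 ∈ P
    · left; intro δ hδ; exact (hkey δ hδ).mpr h0
    · right; intro δ hδ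
      rcases hbip.1 δ with h | h
      · exact absurd ((hkey δ hδ).mp h) h0
      · exact h
  · intro u hu v hv hadj
    have h1 := hkey u hu
    have h2 := hkey v hv
    rcases hbip.2.2 u v hadj with ⟨huP, hvQ⟩ | ⟨huQ, hvP⟩
    · exact Set.disjoint_left.mp hbip.2.1 (h2.mpr (h1.mp huP)) hvQ
    · exact Set.disjoint_left.mp hbip.2.1 (h1.mpr (h2.mp hvP)) huQ
end

section
/- Let X be a simple graph with vertex set Ω, let α ∈ Ω, and let (Ω,S) be a coherent configuration compatible with X in which α is distinguished. Let Δ, Γ, Λ be fibers of (Ω,S) with Γ and Λ each disjoint from Δ. If e_{Δ,Γ} ⊆ e_{Δ,Λ}, then ‖e_{Δ,Λ}‖ divides ‖e_{Δ,Γ}‖. -/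
open SimpleGraph

set_option linter.unusedSectionVars false

section Aux

variable {Ω : Type*} [Fintype Ω] (C : CoherentConfiguration Ω)

lemma cc_unique {s t : Set (Ω × Ω)} (hs : s ∈ C.S) (ht : t ∈ C.S) {p : Ω × Ω}
    (hps : p ∈ s) (hpt : p ∈ t) : s = t := by
  obtain ⟨u, -, hu⟩ := C.partition p
  rw [hu s ⟨hs, hps⟩, hu t ⟨ht, hpt⟩]

lemma cc_fst_mem {Δ : Set Ω} (hΔ : C.IsFiber Δ) {s : Set (Ω × Ω)} (hs : s ∈ C.S)
    {p q : Ω × Ω} (hp : p ∈ s) (hq : q ∈ s) (h : p.1 ∈ Δ) : q.1 ∈ Δ := by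
  have hreg := C.regularity _ hΔ s hs s hs p hp q hq
  have h1 : {γ : Ω | (p.1, γ) ∈ {p : Ω × Ω | p.1 = p.2 ∧ p.1 ∈ Δ} ∧ (γ, p.2) ∈ s} = {p.1} := by
    ext γ
    simp only [Set.mem_setOf_eq, Set.mem_singleton_iff]
    constructor
    · rintro ⟨⟨h1, -⟩, -⟩; exact h1.symm
    · rintro rfl; exact ⟨⟨rfl, h⟩, hp⟩
  rw [h1, Set.ncard_singleton] at hreg
  have := Set.nonempty_of_ncard_ne_zero (by omega : ({γ : Ω | (q.1, γ) ∈ {p : Ω × Ω | p.1 = p.2 ∧ p.1 ∈ Δ} ∧ (γ, q.2) ∈ s}).ncard ≠ 0)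
  obtain ⟨γ, ⟨h1, h2⟩, -⟩ := this
  exact h2

lemma cc_snd_mem {Γ : Set Ω} (hΓ : C.IsFiber Γ) {s : Set (Ω × Ω)} (hs : s ∈ C.S)
    {p q : Ω × Ω} (hp : p ∈ s) (hq : q ∈ s) (h : p.2 ∈ Γ) : q.2 ∈ Γ := by
  have hreg := C.regularity s hs _ hΓ s hs p hp q hq
  have h1 : {γ : Ω | (p.1, γ) ∈ s ∧ (γ, p.2) ∈ {p : Ω × Ω | p.1 = p.2 ∧ p.1 ∈ Γ}} = {p.2} := by
    ext γ
    simp only [Set.mem_setOf_eq, Set.mem_singleton_iff]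
    constructor
    · rintro ⟨-, h1, -⟩; exact h1
    · rintro rfl; exact ⟨hp, rfl, h⟩
  rw [h1, Set.ncard_singleton] at hreg
  have := Set.nonempty_of_ncard_ne_zero (by omega : ({γ : Ω | (q.1, γ) ∈ s ∧ (γ, q.2) ∈ {p : Ω × Ω | p.1 = p.2 ∧ p.1 ∈ Γ}}).ncard ≠ 0)
  obtain ⟨γ, -, h1, h2⟩ := this
  rwa [← h1]

/-- `R` is a union of basis relations. -/
def CCInv (R : Set (Ω × Ω)) : Prop :=
  ∀ s ∈ C.S, ∀ p ∈ s, p ∈ R → s ⊆ R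

lemma cc_counting {R Q : Set (Ω × Ω)} (hR : CCInv C R) (hQ : CCInv C Q)
    {t : Set (Ω × Ω)} (ht : t ∈ C.S) {p q : Ω × Ω} (hp : p ∈ t) (hq : q ∈ t) :
    {γ : Ω | (p.1, γ) ∈ R ∧ (γ, p.2) ∈ Q}.ncard =
      {γ : Ω | (q.1, γ) ∈ R ∧ (γ, q.2) ∈ Q}.ncard := by
  classical
  set F : Finset (Set (Ω × Ω) × Set (Ω × Ω)) :=
    (Set.toFinite {x : Set (Ω × Ω) × Set (Ω × Ω) | x.1 ∈ C.S ∧ x.2 ∈ C.S ∧ x.1 ⊆ R ∧ x.2 ⊆ Q}).toFinset with hF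
  set b : Ω × Ω → Set (Ω × Ω) × Set (Ω × Ω) → Finset Ω :=
    fun p' x => (Set.toFinite {γ : Ω | (p'.1, γ) ∈ x.1 ∧ (γ, p'.2) ∈ x.2}).toFinset with hb
  have key : ∀ p' : Ω × Ω,
      (Set.toFinite {γ : Ω | (p'.1, γ) ∈ R ∧ (γ, p'.2) ∈ Q}).toFinset = F.biUnion (b p') := by
    intro p'
    ext γ
    simp only [Set.Finite.mem_toFinset, Set.mem_setOf_eq, Finset.mem_biUnion, hF, hb]
    constructor
    · rintro ⟨h1, h2⟩
      obtain ⟨r, ⟨hr, hpr⟩, -⟩ := C.partition (p'.1, γ)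
      obtain ⟨s, ⟨hs, hps⟩, -⟩ := C.partition (γ, p'.2)
      exact ⟨(r, s), ⟨hr, hs, hR r hr _ hpr h1, hQ s hs _ hps h2⟩, hpr, hps⟩
    · rintro ⟨x, ⟨-, -, hx1, hx2⟩, h1, h2⟩
      exact ⟨hx1 h1, hx2 h2⟩
  have hdisj : ∀ p' : Ω × Ω, ∀ x ∈ F, ∀ y ∈ F, x ≠ y → Disjoint (b p' x) (b p' y) := by
    intro p' x hx y hy hxy
    simp only [Set.Finite.mem_toFinset, Set.mem_setOf_eq, hF] at hx hy
    rw [Finset.disjoint_left]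
    intro γ hγx hγy
    simp only [Set.Finite.mem_toFinset, Set.mem_setOf_eq, hb] at hγx hγy
    exact hxy (Prod.ext (cc_unique C hx.1 hy.1 hγx.1 hγy.1)
      (cc_unique C hx.2.1 hy.2.1 hγx.2 hγy.2))
  have hcard : ∀ p' : Ω × Ω,
      {γ : Ω | (p'.1, γ) ∈ R ∧ (γ, p'.2) ∈ Q}.ncard = ∑ x ∈ F, (b p' x).card := by
    intro p'
    rw [Set.ncard_eq_toFinset_card' , ← Finset.card_biUnion (hdisj p'), ← key p']
    simp [Set.toFinset_setOf, Set.Finite.toFinset]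
  rw [hcard p, hcard q]
  refine Finset.sum_congr rfl fun x hx => ?_
  simp only [Set.Finite.mem_toFinset, Set.mem_setOf_eq, hF] at hx
  have : ∀ p' : Ω × Ω, (b p' x).card = {γ : Ω | (p'.1, γ) ∈ x.1 ∧ (γ, p'.2) ∈ x.2}.ncard := by
    intro p'
    rw [Set.ncard_eq_toFinset_card]
  rw [this p, this q]
  exact C.regularity x.1 hx.1 x.2 hx.2.1 t ht p hp q hq

end Aux

section Aux2

variable {Ω : Type*} [Fintype Ω] (C : CoherentConfiguration Ω) (X : SimpleGraph Ω)

lemma cc_inv_univ : CCInv C (Set.univ : Set (Ω × Ω)) :=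
  fun _ _ _ _ _ => Set.subset_univ _

lemma cc_nbr_const (hcomp : C.Compatible X) {Γ : Set Ω} (hΓ : C.IsFiber Γ)
    {t : Set (Ω × Ω)} (ht : t ∈ C.S) {p q : Ω × Ω} (hp : p ∈ t) (hq : q ∈ t)
    (h : X.neighborSet p.1 ∩ Γ = X.neighborSet p.2 ∩ Γ) :
    X.neighborSet q.1 ∩ Γ = X.neighborSet q.2 ∩ Γ := by
  set RT : Set (Ω × Ω) := {p | X.Adj p.1 p.2 ∧ p.2 ∈ Γ} with hRTdef
  set RF : Set (Ω × Ω) := {p | X.Adj p.1 p.2 ∧ p.1 ∈ Γ} with hRFdef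
  have hRT : CCInv C RT := by
    intro s hs p0 hp0 hmem q0 hq0
    exact ⟨hcomp s hs ⟨p0, hp0, hmem.1⟩ q0 hq0, cc_snd_mem C hΓ hs hp0 hq0 hmem.2⟩
  have hRF : CCInv C RF := by
    intro s hs p0 hp0 hmem q0 hq0
    exact ⟨hcomp s hs ⟨p0, hp0, hmem.1⟩ q0 hq0, cc_fst_mem C hΓ hs hp0 hq0 hmem.2⟩
  have E1 : ∀ p' : Ω × Ω, {γ : Ω | (p'.1, γ) ∈ RT ∧ (γ, p'.2) ∈ RF}
      = (X.neighborSet p'.1 ∩ Γ) ∩ (X.neighborSet p'.2 ∩ Γ) := by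
    intro p'
    ext γ
    simp only [hRTdef, hRFdef, Set.mem_setOf_eq, Set.mem_inter_iff, mem_neighborSet]
    rw [X.adj_comm γ p'.2]
  have E2 : ∀ p' : Ω × Ω, {γ : Ω | (p'.1, γ) ∈ RT ∧ (γ, p'.2) ∈ (Set.univ : Set (Ω × Ω))}
      = X.neighborSet p'.1 ∩ Γ := by
    intro p'
    ext γ
    simp [hRTdef, mem_neighborSet]
  have E3 : ∀ p' : Ω × Ω, {γ : Ω | (p'.1, γ) ∈ (Set.univ : Set (Ω × Ω)) ∧ (γ, p'.2) ∈ RF}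
      = X.neighborSet p'.2 ∩ Γ := by
    intro p'
    ext γ
    simp only [hRFdef, Set.mem_setOf_eq, Set.mem_inter_iff, mem_neighborSet, Set.mem_univ,
      true_and]
    rw [X.adj_comm γ p'.2]
  have c1 := cc_counting C hRT hRF ht hp hq
  have c2 := cc_counting C hRT (cc_inv_univ C) ht hp hq
  have c3 := cc_counting C (cc_inv_univ C) hRF ht hp hq
  rw [E1 p, E1 q] at c1
  rw [E2 p, E2 q] at c2
  rw [E3 p, E3 q] at c3
  rw [h, Set.inter_self] at c1
  -- c1 : (N p.2 ∩ Γ).ncard = ((N q.1 ∩ Γ) ∩ (N q.2 ∩ Γ)).ncard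
  have hA : (X.neighborSet q.1 ∩ Γ) ∩ (X.neighborSet q.2 ∩ Γ) = X.neighborSet q.1 ∩ Γ := by
    apply Set.eq_of_subset_of_ncard_le Set.inter_subset_left _ (Set.toFinite _)
    rw [← c1, ← c2, h]
  have hB : (X.neighborSet q.1 ∩ Γ) ∩ (X.neighborSet q.2 ∩ Γ) = X.neighborSet q.2 ∩ Γ := by
    apply Set.eq_of_subset_of_ncard_le Set.inter_subset_right _ (Set.toFinite _)
    rw [← c1, ← c3]
  rw [← hA, hB]

lemma cc_eRel_inv (hcomp : C.Compatible X) {Δ Γ : Set Ω} (hΔ : C.IsFiber Δ)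
    (hΓ : C.IsFiber Γ) : CCInv C (eRel X Δ Γ) := by
  intro s hs p hp hmem q hq
  exact ⟨cc_fst_mem C hΔ hs hp hq hmem.1, cc_snd_mem C hΔ hs hp hq hmem.2.1,
    cc_nbr_const C X hcomp hΓ hs hp hq hmem.2.2⟩

lemma cc_class_const (hcomp : C.Compatible X) {Δ Γ : Set Ω} (hΔ : C.IsFiber Δ)
    (hΓ : C.IsFiber Γ) {δ δ' : Ω} (hδ : δ ∈ Δ) (hδ' : δ' ∈ Δ) :
    {x : Ω | (δ, x) ∈ eRel X Δ Γ}.ncard = {x : Ω | (δ', x) ∈ eRel X Δ Γ}.ncard := by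
  have := cc_counting C (cc_eRel_inv C X hcomp hΔ hΓ) (cc_inv_univ C) hΔ
    (p := (δ, δ)) (q := (δ', δ')) ⟨rfl, hδ⟩ ⟨rfl, hδ'⟩
  simpa using this

lemma card_eq_image_mul {α β : Type*} [DecidableEq α] [DecidableEq β] (D : Finset α)
    (f : α → β) (c : ℕ) (h : ∀ a ∈ D, (D.filter fun x => f x = f a).card = c) :
    D.card = (D.image f).card * c := by
  rw [Finset.card_eq_sum_card_image f D]
  rw [Finset.sum_congr rfl (fun b hb => ?_), Finset.sum_const, smul_eq_mul]
  obtain ⟨a, ha, rfl⟩ := Finset.mem_image.mp hb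
  exact h a ha

end Aux2

theorem stmt_6 {Ω : Type*} [Fintype Ω] (X : SimpleGraph Ω) (α : Ω)
    (C : CoherentConfiguration Ω) (hcomp : C.Compatible X) (hdist : C.Distinguished α)
    (Δ Γ Λ : Set Ω) (hΔ : C.IsFiber Δ) (hΓ : C.IsFiber Γ) (hΛ : C.IsFiber Λ)
    (hΓΔ : Disjoint Γ Δ) (hΛΔ : Disjoint Λ Δ)
    (hsub : eRel X Δ Γ ⊆ eRel X Δ Λ) :
    numClasses X Δ Λ ∣ numClasses X Δ Γ := by
  classical
  obtain ⟨p0, hp0⟩ := C.nonempty_mem _ hΔ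
  have hδ0 : p0.1 ∈ Δ := hp0.2
  set δ0 : Ω := p0.1 with hδ0def
  set cΓ : ℕ := {x : Ω | (δ0, x) ∈ eRel X Δ Γ}.ncard with hcΓ
  set cΛ : ℕ := {x : Ω | (δ0, x) ∈ eRel X Δ Λ}.ncard with hcΛ
  have hclΓ : ∀ δ ∈ Δ, {x : Ω | (δ, x) ∈ eRel X Δ Γ}.ncard = cΓ :=
    fun δ hδ => cc_class_const C X hcomp hΔ hΓ hδ hδ0
  have hclΛ : ∀ δ ∈ Δ, {x : Ω | (δ, x) ∈ eRel X Δ Λ}.ncard = cΛ :=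
    fun δ hδ => cc_class_const C X hcomp hΔ hΛ hδ hδ0
  set DΔ : Finset Ω := (Set.toFinite Δ).toFinset with hDΔ
  have hmemD : ∀ x, x ∈ DΔ ↔ x ∈ Δ := fun x => Set.Finite.mem_toFinset _
  have hfilter : ∀ (Θ : Set Ω), ∀ δ ∈ Δ,
      (DΔ.filter fun x => X.neighborSet x ∩ Θ = X.neighborSet δ ∩ Θ).card
        = {x : Ω | (δ, x) ∈ eRel X Δ Θ}.ncard := by
    intro Θ δ hδ
    rw [Set.ncard_eq_toFinset_card _ (Set.toFinite _)]
    congr 1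
    ext x
    simp only [Finset.mem_filter, hmemD, Set.Finite.mem_toFinset, Set.mem_setOf_eq, eRel]
    constructor
    · rintro ⟨hx, he⟩; exact ⟨hδ, hx, he.symm⟩
    · rintro ⟨-, hx, he⟩; exact ⟨hx, he.symm⟩
  have e1 : DΔ.card = (DΔ.image (fun δ => X.neighborSet δ ∩ Γ)).card * cΓ := by
    refine card_eq_image_mul DΔ _ cΓ fun δ hδ => ?_
    rw [hfilter Γ δ ((hmemD δ).mp hδ), hclΓ δ ((hmemD δ).mp hδ)]
  have e2 : DΔ.card = (DΔ.image (fun δ => X.neighborSet δ ∩ Λ)).card * cΛ := by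
    refine card_eq_image_mul DΔ _ cΛ fun δ hδ => ?_
    rw [hfilter Λ δ ((hmemD δ).mp hδ), hclΛ δ ((hmemD δ).mp hδ)]
  set CL : Finset Ω := (Set.toFinite {x : Ω | (δ0, x) ∈ eRel X Δ Λ}).toFinset with hCL
  have hCLcard : CL.card = cΛ := (Set.ncard_eq_toFinset_card _ _).symm
  have hfib3 : ∀ x ∈ CL, (CL.filter fun y => X.neighborSet y ∩ Γ = X.neighborSet x ∩ Γ).card
      = cΓ := by
    intro x hx
    have hx' : (δ0, x) ∈ eRel X Δ Λ := by
      rw [hCL, Set.Finite.mem_toFinset] at hx; exact hx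
    have hxΔ : x ∈ Δ := hx'.2.1
    rw [← hclΓ x hxΔ, Set.ncard_eq_toFinset_card _ (Set.toFinite _)]
    congr 1
    ext y
    simp only [Finset.mem_filter, Set.Finite.mem_toFinset, Set.mem_setOf_eq, hCL]
    constructor
    · rintro ⟨hy, hfy⟩
      exact ⟨hxΔ, hy.2.1, hfy.symm⟩
    · rintro ⟨hxΔ', hyΔ, hfxy⟩
      have hL := hsub ⟨hxΔ', hyΔ, hfxy⟩
      exact ⟨⟨hx'.1, hyΔ, hx'.2.2.trans hL.2.2⟩, hfxy.symm⟩
  have e3 : cΛ = (CL.image (fun δ => X.neighborSet δ ∩ Γ)).card * cΓ := by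
    rw [← hCLcard]
    exact card_eq_image_mul CL _ cΓ hfib3
  have hnumΓ : numClasses X Δ Γ = (DΔ.image (fun δ => X.neighborSet δ ∩ Γ)).card := by
    rw [numClasses, ← Set.ncard_coe_finset, Finset.coe_image, Set.Finite.coe_toFinset]
  have hnumΛ : numClasses X Δ Λ = (DΔ.image (fun δ => X.neighborSet δ ∩ Λ)).card := by
    rw [numClasses, ← Set.ncard_coe_finset, Finset.coe_image, Set.Finite.coe_toFinset]
  have hcΓpos : 0 < cΓ := by
    rw [hcΓ]
    exact (Set.ncard_pos (Set.toFinite _)).mpr ⟨δ0, hδ0, hδ0, rfl⟩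
  have key : (DΔ.image (fun δ => X.neighborSet δ ∩ Γ)).card
      = (DΔ.image (fun δ => X.neighborSet δ ∩ Λ)).card
        * (CL.image (fun δ => X.neighborSet δ ∩ Γ)).card := by
    refine Nat.eq_of_mul_eq_mul_right hcΓpos ?_
    rw [← e1, mul_assoc, ← e3, ← e2]
  rw [hnumΓ, hnumΛ, key]
  exact dvd_mul_right _ _
end
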